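/- For nonnegative integers m, n and integers i, j, s with 1 ≤ i, j ≤ n and 0 ≤ s ≤ n-1, the number of lattice paths (with steps (1,0) and (0,-1)) from R_i to S_j, where R_i = (2i-2, m+i-1) for i ≠ s+1, R_{s+1} = (2s-1, m+s-1), and S_j = (n+j-1, j-1), in which paths starting with a horizontal step at R_i (i ≠ s+1) carry weight 1/2, equals (1/2)·binomial(n+m-i, m+i-j) + binomial(n+m-i, m+i-1-j) for i ≠ s+1, and binomial(n+m-s, m+s-j) for i = s+1. -/

import Mathlib

/-- Binomial coefficient `binomial a b` for integer lower index, zero when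
`b < 0` (and, via `Nat.choose`, when `b > a`). -/
def cb (a : ℕ) (b : ℤ) : ℚ := if 0 ≤ b then (Nat.choose a b.toNat : ℚ) else 0

/-- A list of steps each equal to `(1,0)` or `(0,-1)`. -/
def Steps (l : List (ℤ × ℤ)) : Prop :=
  ∀ p ∈ l, p = ((1 : ℤ), (0 : ℤ)) ∨ p = ((0 : ℤ), (-1 : ℤ))

lemma steps_sum (l : List (ℤ × ℤ)) (h : Steps l) :
    0 ≤ l.sum.1 ∧ l.sum.2 ≤ 0 ∧ l.sum.1 - l.sum.2 = l.length := by
  induction l with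
  | nil => simp
  | cons p t ih =>
    have hp := h p (List.mem_cons_self)
    have ht := ih (fun q hq => h q (List.mem_cons_of_mem _ hq))
    rcases hp with rfl | rfl <;>
      simp only [List.sum_cons, Prod.fst_add, Prod.snd_add, List.length_cons] at * <;>
      push_cast <;> omega

lemma enc_dec (l : List (ℤ × ℤ)) (h : Steps l) :
    (l.map (fun p => p.1 == 1)).map (fun b => if b then ((1 : ℤ), (0 : ℤ)) else (0, -1)) = l := by
  induction l with
  | nil => simp
  | cons p t ih =>
    have hp := h p (List.mem_cons_self)
    have ht : Steps t := fun q hq => h q (List.mem_cons_of_mem _ hq)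
    rcases hp with rfl | rfl <;> simp_all [ih ht]

lemma steps_finite (x y : ℤ) : {l : List (ℤ × ℤ) | Steps l ∧ l.sum = (x, y)}.Finite := by
  apply Set.Finite.subset ((List.finite_length_eq Bool (x - y).toNat).image
    (List.map fun b => if b then ((1 : ℤ), (0 : ℤ)) else (0, -1)))
  rintro l ⟨h1, h2⟩
  refine ⟨l.map (fun p => p.1 == 1), ?_, enc_dec l h1⟩
  have := steps_sum l h1
  rw [h2] at this
  simp only [Set.mem_setOf_eq, List.length_map]
  omega

lemma finite_sub (x y : ℤ) (Q : List (ℤ × ℤ) → Prop) :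
    Finite {l : List (ℤ × ℤ) // Steps l ∧ l.sum = (x, y) ∧ Q l} := by
  have h : {l : List (ℤ × ℤ) | Steps l ∧ l.sum = (x, y) ∧ Q l}.Finite :=
    (steps_finite x y).subset (fun l hl => ⟨hl.1, hl.2.1⟩)
  exact h.to_subtype

instance finite_plain (x y : ℤ) : Finite {l : List (ℤ × ℤ) // Steps l ∧ l.sum = (x, y)} :=
  (steps_finite x y).to_subtype

lemma eq_cons_head {α : Type*} (l : List α) (p : α) (h : l.head? = some p) :
    l = p :: l.tail := by
  cases l <;> simp_all

def eqH (x y : ℤ) :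
    {l : List (ℤ × ℤ) // Steps l ∧ l.sum = (x, y) ∧ l.head? = some ((1 : ℤ), (0 : ℤ))} ≃
    {l : List (ℤ × ℤ) // Steps l ∧ l.sum = (x - 1, y)} where
  toFun l := ⟨l.1.tail, fun q hq => l.2.1 q (List.mem_of_mem_tail hq), by
    have h := l.2.2.1
    rw [eq_cons_head l.1 _ l.2.2.2, List.sum_cons] at h
    have h1 := congrArg Prod.fst h
    have h2 := congrArg Prod.snd h
    simp only [Prod.fst_add, Prod.snd_add] at h1 h2
    exact Prod.ext (by omega) (by omega)⟩
  invFun l := ⟨((1 : ℤ), (0 : ℤ)) :: l.1, by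
    intro q hq
    rcases List.mem_cons.mp hq with rfl | h
    · exact Or.inl rfl
    · exact l.2.1 q h, by
    refine ⟨?_, rfl⟩
    rw [List.sum_cons, l.2.2]
    exact Prod.ext (by simp) (by simp)⟩
  left_inv l := Subtype.ext (eq_cons_head l.1 _ l.2.2.2).symm
  right_inv l := Subtype.ext rfl

lemma eq_cons_vert (x y : ℤ) (l : List (ℤ × ℤ)) (hS : Steps l) (hsum : l.sum = (x, y))
    (hne : ¬(x = 0 ∧ y = 0)) (hh : l.head? ≠ some ((1 : ℤ), (0 : ℤ))) :
    l = ((0 : ℤ), (-1 : ℤ)) :: l.tail := by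
  cases l with
  | nil =>
    exfalso
    apply hne
    simp only [List.sum_nil] at hsum
    have h1 := congrArg Prod.fst hsum
    have h2 := congrArg Prod.snd hsum
    simp at h1 h2
    exact ⟨h1.symm, h2.symm⟩
  | cons p t =>
    rcases hS p (List.mem_cons_self) with rfl | rfl
    · simp at hh
    · rfl

def eqV (x y : ℤ) (hne : ¬(x = 0 ∧ y = 0)) :
    {l : List (ℤ × ℤ) // Steps l ∧ l.sum = (x, y) ∧ l.head? ≠ some ((1 : ℤ), (0 : ℤ))} ≃
    {l : List (ℤ × ℤ) // Steps l ∧ l.sum = (x, y + 1)} where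
  toFun l := ⟨l.1.tail, fun q hq => l.2.1 q (List.mem_of_mem_tail hq), by
    have h := l.2.2.1
    rw [eq_cons_vert x y l.1 l.2.1 l.2.2.1 hne l.2.2.2, List.sum_cons] at h
    have h1 := congrArg Prod.fst h
    have h2 := congrArg Prod.snd h
    simp only [Prod.fst_add, Prod.snd_add] at h1 h2
    exact Prod.ext (by omega) (by omega)⟩
  invFun l := ⟨((0 : ℤ), (-1 : ℤ)) :: l.1, by
    intro q hq
    rcases List.mem_cons.mp hq with rfl | h
    · exact Or.inr rfl
    · exact l.2.1 q h, by
    refine ⟨?_, by simp⟩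
    rw [List.sum_cons, l.2.2]
    exact Prod.ext (by simp) (by simp)⟩
  left_inv l := Subtype.ext (eq_cons_vert x y l.1 l.2.1 l.2.2.1 hne l.2.2.2).symm
  right_inv l := Subtype.ext rfl

def splitEquiv {α : Type*} (P Q : α → Prop) [DecidablePred Q] :
    {a // P a} ≃ {a // P a ∧ Q a} ⊕ {a // P a ∧ ¬Q a} where
  toFun a := if h : Q a.1 then .inl ⟨a.1, a.2, h⟩ else .inr ⟨a.1, a.2, h⟩
  invFun x := x.elim (fun a => ⟨a.1, a.2.1⟩) (fun a => ⟨a.1, a.2.1⟩)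
  left_inv a := by by_cases h : Q a.1 <;> simp [h]
  right_inv x := by rcases x with a | a <;> simp [a.2.2]

lemma card_split (x y : ℤ) :
    Nat.card {l : List (ℤ × ℤ) // Steps l ∧ l.sum = (x, y)} =
    Nat.card {l : List (ℤ × ℤ) // Steps l ∧ l.sum = (x, y) ∧
        l.head? = some ((1 : ℤ), (0 : ℤ))} +
    Nat.card {l : List (ℤ × ℤ) // Steps l ∧ l.sum = (x, y) ∧
        l.head? ≠ some ((1 : ℤ), (0 : ℤ))} := by
  haveI := finite_sub x y (fun l => l.head? = some ((1 : ℤ), (0 : ℤ)))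
  haveI := finite_sub x y (fun l => l.head? ≠ some ((1 : ℤ), (0 : ℤ)))
  rw [← Nat.card_sum]
  refine Nat.card_congr ((splitEquiv (fun l => Steps l ∧ l.sum = (x, y))
    (fun l => l.head? = some ((1 : ℤ), (0 : ℤ)))).trans (Equiv.sumCongr
      (Equiv.subtypeEquivRight (by tauto)) (Equiv.subtypeEquivRight (by tauto))))

lemma card_neg (x y : ℤ) (h : ¬(0 ≤ x ∧ y ≤ 0)) :
    Nat.card {l : List (ℤ × ℤ) // Steps l ∧ l.sum = (x, y)} = 0 := by
  have : IsEmpty {l : List (ℤ × ℤ) // Steps l ∧ l.sum = (x, y)} := by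
    refine ⟨fun l => ?_⟩
    have := steps_sum l.1 l.2.1
    rw [l.2.2] at this
    exact h ⟨this.1, this.2.1⟩
  exact Nat.card_of_isEmpty

lemma nil_unique (l : List (ℤ × ℤ)) (hS : Steps l) (h : l.sum = ((0 : ℤ), (0 : ℤ))) :
    l = [] := by
  have := steps_sum l hS
  rw [h] at this
  simp only at this
  cases l with
  | nil => rfl
  | cons p t => simp at this; omega

lemma main_count : ∀ N a b : ℕ, a + b = N →
    Nat.card {l : List (ℤ × ℤ) // Steps l ∧ l.sum = ((a : ℤ), -(b : ℤ))} =
    (a + b).choose a := by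
  intro N
  induction N with
  | zero =>
    intro a b hab
    obtain ⟨rfl, rfl⟩ : a = 0 ∧ b = 0 := by omega
    have h1 : (0 + 0).choose 0 = 1 := rfl
    rw [h1, Nat.card_eq_one_iff_unique]
    constructor
    · refine ⟨fun l₁ l₂ => Subtype.ext ?_⟩
      rw [nil_unique l₁.1 l₁.2.1 (by simpa using l₁.2.2),
        nil_unique l₂.1 l₂.2.1 (by simpa using l₂.2.2)]
    · exact ⟨⟨[], fun p hp => by simp at hp, by simp; rfl⟩⟩
  | succ N ih =>
    intro a b hab
    have hne : ¬(((a : ℕ) : ℤ) = 0 ∧ (-(b : ℤ)) = 0) := by omega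
    rw [card_split, Nat.card_congr (eqH _ _), Nat.card_congr (eqV _ _ hne)]
    rcases a with _ | a' <;> rcases b with _ | b'
    · omega
    ·
      rw [card_neg (((0 : ℕ) : ℤ) - 1) (-(((b' + 1 : ℕ)) : ℤ)) (by omega)]
      have h2 : (-((b' + 1 : ℕ) : ℤ) + 1) = -((b' : ℕ) : ℤ) := by push_cast; ring
      rw [h2, ih 0 b' (by omega)]
      simp
    · rw [card_neg (((a' + 1 : ℕ) : ℤ)) (-(((0 : ℕ)) : ℤ) + 1) (by omega)]
      have h1 : (((a' + 1 : ℕ) : ℤ) - 1) = ((a' : ℕ) : ℤ) := by push_cast; ring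
      rw [h1, ih a' 0 (by omega)]
      simp [Nat.choose_self]
    · have h1 : (((a' + 1 : ℕ) : ℤ) - 1) = ((a' : ℕ) : ℤ) := by push_cast; ring
      have h2 : (-((b' + 1 : ℕ) : ℤ) + 1) = -((b' : ℕ) : ℤ) := by push_cast; ring
      rw [h1, h2, ih a' (b' + 1) (by omega), ih (a' + 1) b' (by omega)]
      have h3 : a' + 1 + (b' + 1) = (a' + b' + 1) + 1 := by omega
      have h4 : a' + 1 + b' = a' + b' + 1 := by omega
      have h5 : a' + (b' + 1) = a' + b' + 1 := by omega
      rw [h3, h4, h5]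
      exact (Nat.choose_succ_succ _ _).symm

lemma bridge (A : ℕ) (b x y : ℤ) (hA : x - y = (A : ℤ)) (hb : b = -y) :
    (Nat.card {l : List (ℤ × ℤ) // Steps l ∧ l.sum = (x, y)} : ℚ) = cb A b := by
  subst hb
  unfold cb
  by_cases hx : 0 ≤ x
  · by_cases hy : y ≤ 0
    · obtain ⟨a, rfl⟩ : ∃ a : ℕ, x = (a : ℤ) := ⟨x.toNat, by omega⟩
      obtain ⟨c, rfl⟩ : ∃ c : ℕ, y = -(c : ℤ) := ⟨(-y).toNat, by omega⟩
      have hAeq : A = a + c := by omega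
      have htn : (-(-(c : ℤ))).toNat = c := by omega
      rw [main_count (a + c) a c rfl, if_pos (by omega), hAeq, htn]
      norm_cast
      rw [← Nat.choose_symm (Nat.le_add_right a c), Nat.add_sub_cancel_left]
    · rw [card_neg _ _ (fun hc => hy hc.2), if_neg (by omega)]
      try simp
  · rw [card_neg _ _ (fun hc => hx hc.1)]
    by_cases hy : (0 : ℤ) ≤ -y
    · rw [if_pos hy, Nat.choose_eq_zero_of_lt (by omega)]
      try simp
    · rw [if_neg hy]
      try simp

lemma bridgeH (A : ℕ) (b x y : ℤ) (hA : x - 1 - y = (A : ℤ)) (hb : b = -y) :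
    (Nat.card {l : List (ℤ × ℤ) // Steps l ∧ l.sum = (x, y) ∧
        l.head? = some ((1 : ℤ), (0 : ℤ))} : ℚ) = cb A b := by
  rw [Nat.card_congr (eqH x y)]
  exact bridge A b (x - 1) y hA hb

lemma bridgeV (A : ℕ) (b x y : ℤ) (hne : ¬(x = 0 ∧ y = 0)) (hA : x - (y + 1) = (A : ℤ))
    (hb : b = -(y + 1)) :
    (Nat.card {l : List (ℤ × ℤ) // Steps l ∧ l.sum = (x, y) ∧
        l.head? ≠ some ((1 : ℤ), (0 : ℤ))} : ℚ) = cb A b := by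
  rw [Nat.card_congr (eqV x y hne)]
  exact bridge A b x (y + 1) hA hb


/-- Lemma on the weighted lattice path counts for the lower half: paths run
from `R_i = (2i-2, m+i-1)` (for `i ≠ s+1`), resp. `R_{s+1} = (2s-1, m+s-1)`,
to `S_j = (n+j-1, j-1)`, where for `i ≠ s+1` a path starting with a
horizontal step carries weight `1/2`.  The weighted count equals
`(1/2)·C(n+m-i, m+i-j) + C(n+m-i, m+i-1-j)` for `i ≠ s+1`, and
`C(n+m-s, m+s-j)` for `i = s+1`. -/
theorem weighted_path_counts (n m s i j : ℕ) (hs : s < n)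
    (hi1 : 1 ≤ i) (hi2 : i ≤ n) (hj1 : 1 ≤ j) (hj2 : j ≤ n) :
    (i ≠ s + 1 →
      (1 / 2 : ℚ) * (Nat.card {l : List (ℤ × ℤ) // Steps l ∧
          l.sum = (((n : ℤ) + j - 1) - (2 * (i : ℤ) - 2), ((j : ℤ) - 1) - ((m : ℤ) + i - 1)) ∧
          l.head? = some ((1 : ℤ), (0 : ℤ))}) +
        (Nat.card {l : List (ℤ × ℤ) // Steps l ∧
          l.sum = (((n : ℤ) + j - 1) - (2 * (i : ℤ) - 2), ((j : ℤ) - 1) - ((m : ℤ) + i - 1)) ∧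
          l.head? ≠ some ((1 : ℤ), (0 : ℤ))}) =
      (1 / 2 : ℚ) * cb (n + m - i) ((m : ℤ) + i - j) + cb (n + m - i) ((m : ℤ) + i - 1 - j)) ∧
    (i = s + 1 →
      (Nat.card {l : List (ℤ × ℤ) // Steps l ∧
          l.sum = (((n : ℤ) + j - 1) - (2 * (s : ℤ) - 1), ((j : ℤ) - 1) - ((m : ℤ) + s - 1))} : ℚ) =
      cb (n + m - s) ((m : ℤ) + s - j)) := by
  constructor
  · intro _
    rw [bridgeH (n + m - i) ((m : ℤ) + i - j)
        (((n : ℤ) + j - 1) - (2 * (i : ℤ) - 2)) (((j : ℤ) - 1) - ((m : ℤ) + i - 1))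
        (by omega) (by ring),
      bridgeV (n + m - i) ((m : ℤ) + i - 1 - j)
        (((n : ℤ) + j - 1) - (2 * (i : ℤ) - 2)) (((j : ℤ) - 1) - ((m : ℤ) + i - 1))
        (by omega) (by omega) (by ring)]
  · intro _
    exact bridge (n + m - s) ((m : ℤ) + s - j)
      (((n : ℤ) + j - 1) - (2 * (s : ℤ) - 1)) (((j : ℤ) - 1) - ((m : ℤ) + s - 1))
      (by omega) (by ring)
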